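/- For every non-integer β > 1 and every point x in J_β not belonging to the exceptional null set N (points whose orbit under some composition of greedy/lazy branches has a unique expansion), distinct coin-flip sequences ω ≠ ω' ∈ {0,1}^ℕ produce distinct digit sequences: (d_i(ω,x))_{i≥1} ≠ (d_i(ω',x))_{i≥1}. Consequently such x has at least 2^{ℵ₀} distinct expansions in base β. -/

import Mathlib

open MeasureTheory Set
open scoped Classical

/-- The interval `J_β = [0, ⌊β⌋/(β-1)]`. -/
noncomputable def Jbeta (β : ℝ) : Set ℝ := Set.Icc 0 ((⌊β⌋ : ℝ) / (β - 1))

/-- The greedy digit of `x` in base `β`: equals `j` iff `x ∈ C(j)`, where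
`C(j) = [j/β, (j+1)/β)` for `j < ⌊β⌋` and `C(⌊β⌋) = [⌊β⌋/β, ⌊β⌋/(β-1)]`. -/
noncomputable def gdigit (β x : ℝ) : ℤ := min ⌊β * x⌋ ⌊β⌋

/-- The greedy map `T_β(x) = βx - d` for `x ∈ C(d)`. -/
noncomputable def gmap (β x : ℝ) : ℝ := β * x - gdigit β x

/-- The reflection `ℓ(x) = ⌊β⌋/(β-1) - x`. -/
noncomputable def lref (β x : ℝ) : ℝ := (⌊β⌋ : ℝ) / (β - 1) - x

/-- The lazy digit: the `d` with `x ∈ Δ(d) = ℓ(C(⌊β⌋ - d))`. -/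
noncomputable def ldigit (β x : ℝ) : ℤ := ⌊β⌋ - gdigit β (lref β x)

/-- The lazy map `L_β(x) = βx - d` for `x ∈ Δ(d)`. -/
noncomputable def lmap (β x : ℝ) : ℝ := β * x - ldigit β x

/-- Membership in the union of the switch regions
`S_k = [k/β, ⌊β⌋/(β(β-1)) + (k-1)/β]`, `k = 1, …, ⌊β⌋`. -/
def inSwitch (β x : ℝ) : Prop :=
  ∃ k : ℤ, 1 ≤ k ∧ k ≤ ⌊β⌋ ∧ (k : ℝ) / β ≤ x ∧
    x ≤ (⌊β⌋ : ℝ) / (β * (β - 1)) + ((k : ℝ) - 1) / β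

/-- The digit `d_1(ω,x)` assigned by the random map: the greedy digit, unless `x` is
in a switch region and the first coin is `0` (tails), in which case the lazy digit. -/
noncomputable def rdigit (β : ℝ) (ω : ℕ → Bool) (x : ℝ) : ℤ :=
  if inSwitch β x ∧ ω 0 = false then ldigit β x else gdigit β x

/-- The random β-expansion map `K_β` on `Ω × J_β`, `Ω = {0,1}^ℕ`: the coin sequence is
shifted exactly when `x` lies in a switch region. -/
noncomputable def kmap (β : ℝ) (p : (ℕ → Bool) × ℝ) : (ℕ → Bool) × ℝ :=
  ((if inSwitch β p.2 then (fun n => p.1 (n + 1)) else p.1),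
    β * p.2 - rdigit β p.1 p.2)

/-- The digit `d_{n+1}(ω,x) = d_1(K_β^n(ω,x))` of the random β-expansion. -/
noncomputable def rdig (β : ℝ) (n : ℕ) (ω : ℕ → Bool) (x : ℝ) : ℤ :=
  rdigit β ((kmap β)^[n] (ω, x)).1 ((kmap β)^[n] (ω, x)).2

/-- `a` is a β-expansion of `x` with digits in `{0, …, ⌊β⌋}`. -/
def IsExpansionOf (β x : ℝ) (a : ℕ → ℤ) : Prop :=
  (∀ i, 0 ≤ a i ∧ a i ≤ ⌊β⌋) ∧ x = ∑' i : ℕ, (a i : ℝ) / β ^ (i + 1)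

/-- The set `G` of points of `J_β` with a unique β-expansion. -/
def uniqueExpSet (β : ℝ) : Set ℝ :=
  {x | x ∈ Jbeta β ∧ ∃! a : ℕ → ℤ, IsExpansionOf β x a}

/-- The exceptional set `N = ⋃_{n≥1} {x : T_{u_1} ∘ ⋯ ∘ T_{u_n} x ∈ G for some
`u_1, …, u_n ∈ {0,1}`}`, where `T_1 = T_β` and `T_0 = L_β`. -/
noncomputable def exceptionalSet (β : ℝ) : Set ℝ :=
  {x | ∃ l : List Bool, l ≠ [] ∧
    l.foldr (fun u y => if u then gmap β y else lmap β y) x ∈ uniqueExpSet β}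
section Basic

variable {β x : ℝ}

lemma floor_one_le (hβ : 1 < β) : (1 : ℤ) ≤ ⌊β⌋ :=
  Int.le_floor.mpr (by exact_mod_cast hβ.le)

lemma one_lt_F (hβ : 1 < β) : 1 < (⌊β⌋ : ℝ) / (β - 1) := by
  rw [lt_div_iff₀ (by linarith)]
  have h := Int.lt_floor_add_one β
  linarith

lemma betaF (hβ : 1 < β) : β * ((⌊β⌋ : ℝ) / (β - 1)) = (⌊β⌋ : ℝ) + (⌊β⌋ : ℝ) / (β - 1) := by
  have hb : β - 1 ≠ 0 := by intro h; linarith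
  field_simp
  ring

lemma gdigit_nonneg (hβ : 1 < β) (hx : 0 ≤ x) : 0 ≤ gdigit β x :=
  le_min (Int.floor_nonneg.2 (by positivity)) ((by norm_num : (0:ℤ) ≤ 1).trans (floor_one_le hβ))

lemma gdigit_le (hβ : 1 < β) : gdigit β x ≤ ⌊β⌋ := min_le_right _ _

lemma gdigit_le_mul : (gdigit β x : ℝ) ≤ β * x := by
  have h1 : (gdigit β x : ℝ) ≤ (⌊β * x⌋ : ℝ) := by exact_mod_cast min_le_left ⌊β * x⌋ ⌊β⌋
  exact h1.trans (Int.floor_le _)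

lemma gmap_mem (hβ : 1 < β) (hx : x ∈ Jbeta β) : gmap β x ∈ Jbeta β := by
  obtain ⟨h0, h1⟩ := hx
  constructor
  · have := gdigit_le_mul (β := β) (x := x)
    simp only [gmap]; linarith
  · unfold gmap gdigit
    rcases min_cases ⌊β * x⌋ ⌊β⌋ with ⟨he, _⟩ | ⟨he, _⟩ <;> rw [he]
    · have h2 : β * x - (⌊β * x⌋ : ℝ) < 1 := by
        have := Int.lt_floor_add_one (β * x); linarith
      have := one_lt_F hβ; linarith
    · have hbx : β * x ≤ β * ((⌊β⌋ : ℝ) / (β - 1)) := by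
        apply mul_le_mul_of_nonneg_left h1 (by linarith)
      have := betaF hβ
      linarith

lemma lref_mem (hx : x ∈ Jbeta β) : lref β x ∈ Jbeta β := by
  obtain ⟨h0, h1⟩ := hx
  exact ⟨by simp [lref]; linarith, by simp [lref]; linarith⟩

lemma ldigit_nonneg (hβ : 1 < β) : 0 ≤ ldigit β x := by
  unfold ldigit
  have := gdigit_le (β := β) (x := lref β x) hβ
  omega

lemma ldigit_le (hβ : 1 < β) (hx : x ∈ Jbeta β) : ldigit β x ≤ ⌊β⌋ := by
  unfold ldigit
  have := gdigit_nonneg hβ (lref_mem hx).1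
  omega

lemma lmap_eq (hβ : 1 < β) : lmap β x = lref β (gmap β (lref β x)) := by
  unfold lmap ldigit lref gmap
  have hb : β - 1 ≠ 0 := by intro h; linarith
  push_cast
  field_simp
  ring

lemma lmap_mem (hβ : 1 < β) (hx : x ∈ Jbeta β) : lmap β x ∈ Jbeta β := by
  rw [lmap_eq hβ]
  exact lref_mem (gmap_mem hβ (lref_mem hx))

end Basic
section Digits

variable {β x : ℝ}

lemma Fdiv (hβ : 1 < β) : (⌊β⌋ : ℝ) / (β * (β - 1)) = ((⌊β⌋ : ℝ) / (β - 1)) / β := by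
  rw [div_div]
  ring_nf

lemma beta_lref (hβ : 1 < β) :
    β * lref β x = (⌊β⌋ : ℝ) + (⌊β⌋ : ℝ) / (β - 1) - β * x := by
  unfold lref
  rw [mul_sub, betaF hβ]

lemma gdigit_eq_floor (h : gdigit β x < ⌊β⌋) : gdigit β x = ⌊β * x⌋ := by
  unfold gdigit at *
  omega

lemma switch_lt (hβ : 1 < β) (hs : inSwitch β x) : ldigit β x < gdigit β x := by
  obtain ⟨k, hk1, hkD, hxl, hxu⟩ := hs
  have hβ0 : (0:ℝ) < β := lt_trans one_pos hβ
  have hg : k ≤ gdigit β x := by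
    refine le_min (Int.le_floor.2 ?_) hkD
    rw [div_le_iff₀ hβ0] at hxl
    linarith [hxl]
  have hkey : ((⌊β⌋ - k + 1 : ℤ) : ℝ) ≤ β * lref β x := by
    rw [beta_lref hβ]
    rw [Fdiv hβ] at hxu
    have h2 : β * x ≤ β * (((⌊β⌋ : ℝ) / (β - 1)) / β + ((k : ℝ) - 1) / β) :=
      mul_le_mul_of_nonneg_left hxu (le_of_lt hβ0)
    have h3 : β * (((⌊β⌋ : ℝ) / (β - 1)) / β + ((k : ℝ) - 1) / β)
        = (⌊β⌋ : ℝ) / (β - 1) + ((k : ℝ) - 1) := by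
      field_simp
    push_cast
    rw [h3] at h2
    linarith
  have hgl : ⌊β⌋ - k + 1 ≤ gdigit β (lref β x) := by
    refine le_min (Int.le_floor.2 hkey) (by omega)
  unfold ldigit
  omega

lemma ldigit_upper (hβ : 1 < β) :
    x ≤ (⌊β⌋ : ℝ) / (β * (β - 1)) + ((ldigit β x : ℝ)) / β := by
  have hβ0 : (0:ℝ) < β := lt_trans one_pos hβ
  have h1 : ((⌊β⌋ - ldigit β x : ℤ) : ℝ) ≤ β * lref β x := by
    have h : gdigit β (lref β x) = ⌊β⌋ - ldigit β x := by unfold ldigit; ring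
    rw [← h]
    exact gdigit_le_mul
  rw [beta_lref hβ] at h1
  push_cast at h1
  rw [Fdiv hβ, ← add_div, le_div_iff₀ hβ0]
  linarith [mul_comm x β]

lemma gdigit_lower (hβ : 1 < β) : (gdigit β x : ℝ) / β ≤ x := by
  have hβ0 : (0:ℝ) < β := lt_trans one_pos hβ
  rw [div_le_iff₀ hβ0]
  have := gdigit_le_mul (β := β) (x := x)
  linarith

lemma noswitch_eq (hβ : 1 < β) (hx : x ∈ Jbeta β) (hs : ¬ inSwitch β x) :
    gdigit β x = ldigit β x := by
  have hβ0 : (0:ℝ) < β := lt_trans one_pos hβ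
  set g := gdigit β x with hgdef
  set l := ldigit β x with hldef
  have hg0 : 0 ≤ g := gdigit_nonneg hβ hx.1
  have hgD : g ≤ ⌊β⌋ := gdigit_le hβ
  have hl0 : 0 ≤ l := ldigit_nonneg hβ
  have hlD : l ≤ ⌊β⌋ := ldigit_le hβ hx
  rcases lt_trichotomy l g with h | h | h
  · -- l < g gives a switch witness k = l + 1
    exfalso
    apply hs
    refine ⟨l + 1, by omega, by omega, ?_, ?_⟩
    · push_cast
      have h1 : ((l:ℝ) + 1) ≤ (g:ℝ) := by exact_mod_cast (by omega : l + 1 ≤ g)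
      have h2 := gdigit_lower (x := x) hβ
      have h3 : ((l:ℝ)+1)/β ≤ (g:ℝ)/β := by gcongr
      linarith
    · push_cast
      have h4 := ldigit_upper (x := x) hβ
      have he : ((l:ℝ) + 1 - 1) = (l:ℝ) := by ring
      rw [he]
      exact h4
  · exact h.symm
  · -- g < l impossible
    exfalso
    have hgfl : g = ⌊β * x⌋ := gdigit_eq_floor (by omega)
    have hxlt : β * x < (l : ℝ) := by
      have h5 := Int.lt_floor_add_one (β * x)
      rw [← hgfl] at h5
      have hcast : (g : ℝ) + 1 ≤ (l : ℝ) := by exact_mod_cast (by omega : g + 1 ≤ l)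
      linarith
    have hgl : gdigit β (lref β x) = ⌊β⌋ - l := by unfold ldigit at hldef; omega
    have hglfl : gdigit β (lref β x) = ⌊β * lref β x⌋ := gdigit_eq_floor (by omega)
    have h2 : β * lref β x < ((⌊β⌋ - l : ℤ) : ℝ) + 1 := by
      have h6 := Int.lt_floor_add_one (β * lref β x)
      rw [← hglfl, hgl] at h6
      exact_mod_cast h6
    rw [beta_lref hβ] at h2
    push_cast at h2
    have hF := one_lt_F hβ
    linarith

end Digits
section Orbit

variable {β x : ℝ} {ω : ℕ → Bool}

lemma rdigit_cases (β : ℝ) (ω : ℕ → Bool) (x : ℝ) :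
    rdigit β ω x = gdigit β x ∨ rdigit β ω x = ldigit β x := by
  unfold rdigit
  split_ifs <;> simp

lemma rdigit_nonneg (hβ : 1 < β) (hx : x ∈ Jbeta β) : 0 ≤ rdigit β ω x := by
  rcases rdigit_cases β ω x with h | h <;> rw [h]
  · exact gdigit_nonneg hβ hx.1
  · exact ldigit_nonneg hβ

lemma rdigit_le (hβ : 1 < β) (hx : x ∈ Jbeta β) : rdigit β ω x ≤ ⌊β⌋ := by
  rcases rdigit_cases β ω x with h | h <;> rw [h]
  · exact gdigit_le hβ
  · exact ldigit_le hβ hx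

lemma rstep_mem (hβ : 1 < β) (hx : x ∈ Jbeta β) : β * x - (rdigit β ω x : ℝ) ∈ Jbeta β := by
  rcases rdigit_cases β ω x with h | h <;> rw [h]
  · exact gmap_mem hβ hx
  · exact lmap_mem hβ hx

lemma orbit_mem (hβ : 1 < β) :
    ∀ (n : ℕ) (p : (ℕ → Bool) × ℝ), p.2 ∈ Jbeta β → ((kmap β)^[n] p).2 ∈ Jbeta β := by
  intro n
  induction n with
  | zero => intro p hp; simpa using hp
  | succ n ih =>
    intro p hp
    rw [Function.iterate_succ_apply]
    exact ih _ (rstep_mem hβ hp)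

lemma orbit_succ (β : ℝ) (n : ℕ) (ω : ℕ → Bool) (x : ℝ) :
    ((kmap β)^[n+1] (ω, x)).2 = β * ((kmap β)^[n] (ω, x)).2 - (rdig β n ω x : ℝ) := by
  rw [Function.iterate_succ_apply']
  rfl

lemma partial_sum (hβ : 1 < β) (n : ℕ) :
    ∑ i ∈ Finset.range n, (rdig β i ω x : ℝ) / β ^ (i + 1)
      = x - ((kmap β)^[n] (ω, x)).2 / β ^ n := by
  induction n with
  | zero => simp
  | succ n ih =>
    rw [Finset.sum_range_succ, ih, orbit_succ]
    have hβ0 : (0:ℝ) < β := lt_trans one_pos hβ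
    have hpow : (0:ℝ) < β ^ n := pow_pos hβ0 n
    field_simp
    ring

lemma rdig_expansion (hβ : 1 < β) (hx : x ∈ Jbeta β) (ω : ℕ → Bool) :
    IsExpansionOf β x (fun i => rdig β i ω x) := by
  have hβ0 : (0:ℝ) < β := lt_trans one_pos hβ
  constructor
  · intro i
    have hmem : ((kmap β)^[i] (ω, x)).2 ∈ Jbeta β := orbit_mem hβ i (ω, x) hx
    exact ⟨rdigit_nonneg hβ hmem, rdigit_le hβ hmem⟩
  · have hnn : ∀ i, (0:ℝ) ≤ (rdig β i ω x : ℝ) / β ^ (i + 1) := by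
      intro i
      have hmem : ((kmap β)^[i] (ω, x)).2 ∈ Jbeta β := orbit_mem hβ i (ω, x) hx
      have := rdigit_nonneg hβ hmem (ω := ((kmap β)^[i] (ω, x)).1)
      have h0 : (0:ℝ) ≤ (rdig β i ω x : ℝ) := by exact_mod_cast this
      positivity
    have hts : Filter.Tendsto
        (fun n => ∑ i ∈ Finset.range n, (rdig β i ω x : ℝ) / β ^ (i + 1))
        Filter.atTop (nhds x) := by
      simp only [partial_sum hβ]
      have h1 : Filter.Tendsto (fun n : ℕ => ((kmap β)^[n] (ω, x)).2 / β ^ n)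
          Filter.atTop (nhds 0) := by
        have hF : (0:ℝ) < (⌊β⌋ : ℝ) / (β - 1) := lt_trans one_pos (one_lt_F hβ)
        refine squeeze_zero (g := fun n : ℕ => ((⌊β⌋ : ℝ) / (β - 1)) * (1 / β) ^ n)
            (fun n => ?_) (fun n => ?_) ?_
        · exact div_nonneg (orbit_mem hβ n (ω, x) hx).1 (le_of_lt (pow_pos hβ0 n))
        · have hle := (orbit_mem hβ n (ω, x) hx).2
          show ((kmap β)^[n] (ω, x)).2 / β ^ n ≤ (⌊β⌋ : ℝ) / (β - 1) * (1 / β) ^ n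
          rw [div_pow, one_pow, mul_div_assoc' , mul_one, div_le_div_iff₀ (pow_pos hβ0 n) (pow_pos hβ0 n)]
          nlinarith [pow_pos hβ0 n]
        · have : Filter.Tendsto (fun n : ℕ => (1 / β) ^ n) Filter.atTop (nhds 0) := by
            apply tendsto_pow_atTop_nhds_zero_of_lt_one
            · positivity
            · rw [div_lt_iff₀ hβ0]; linarith
          simpa using this.const_mul ((⌊β⌋ : ℝ) / (β - 1))
      have h2 := Filter.Tendsto.const_sub x h1
      simpa using h2
    have := (hasSum_iff_tendsto_nat_of_nonneg hnn x).2 hts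
    exact this.tsum_eq.symm

end Orbit
section Unique

variable {β x y : ℝ} {a : ℕ → ℤ}

lemma exp_summable (hβ : 1 < β) (ha : ∀ i, 0 ≤ a i ∧ a i ≤ ⌊β⌋) :
    Summable (fun i => (a i : ℝ) / β ^ (i + 1)) := by
  have hβ0 : (0:ℝ) < β := lt_trans one_pos hβ
  apply Summable.of_nonneg_of_le (fun i => ?_) (fun i => ?_)
    ((summable_geometric_of_lt_one (r := 1/β) (by positivity)
      (by rw [div_lt_iff₀ hβ0]; linarith)).mul_left ((⌊β⌋ : ℝ) * (1/β)))
  · have h0 : (0:ℝ) ≤ (a i : ℝ) := by exact_mod_cast (ha i).1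
    positivity
  · have hD : (a i : ℝ) ≤ (⌊β⌋ : ℝ) := by exact_mod_cast (ha i).2
    have he : (⌊β⌋:ℝ) * (1/β) * (1/β)^i = (⌊β⌋:ℝ) / β^(i+1) := by
      rw [div_pow, one_pow, pow_succ]
      field_simp
      all_goals exact Or.inl (by ring)
    rw [he]
    gcongr

lemma exp_tail_le (hβ : 1 < β) (ha : ∀ i, 0 ≤ a i ∧ a i ≤ ⌊β⌋) :
    ∑' i, (a i : ℝ) / β ^ (i + 1) ≤ (⌊β⌋ : ℝ) / (β - 1) := by
  have hβ0 : (0:ℝ) < β := lt_trans one_pos hβ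
  have hr0 : (0:ℝ) ≤ 1/β := by positivity
  have hr1 : 1/β < 1 := by rw [div_lt_iff₀ hβ0]; linarith
  have hge : Summable (fun i : ℕ => ((⌊β⌋:ℝ) * (1/β)) * (1/β)^i) :=
    (summable_geometric_of_lt_one hr0 hr1).mul_left _
  have hle : ∀ i, (a i : ℝ) / β ^ (i + 1) ≤ ((⌊β⌋:ℝ) * (1/β)) * (1/β)^i := by
    intro i
    have hD : (a i : ℝ) ≤ (⌊β⌋ : ℝ) := by exact_mod_cast (ha i).2
    have he : (⌊β⌋:ℝ) * (1/β) * (1/β)^i = (⌊β⌋:ℝ) / β^(i+1) := by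
      rw [div_pow, one_pow, pow_succ]
      field_simp
      all_goals exact Or.inl (by ring)
    rw [he]
    gcongr
  calc ∑' i, (a i : ℝ) / β ^ (i + 1) ≤ ∑' i : ℕ, ((⌊β⌋:ℝ) * (1/β)) * (1/β)^i :=
        Summable.tsum_le_tsum hle (exp_summable hβ ha) hge
    _ = (⌊β⌋:ℝ) / (β - 1) := by
        rw [tsum_mul_left, tsum_geometric_of_lt_one hr0 hr1]
        have hβne : β ≠ 0 := ne_of_gt hβ0
        have h9 : (1 - 1/β)⁻¹ = β/(β-1) := by rw [one_sub_div hβne, inv_div]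
        rw [h9]
        have hβ1 : β - 1 ≠ 0 := by intro h; linarith
        field_simp
        all_goals ring

lemma ustep (hβ : 1 < β) (hx : x ∈ Jbeta β) (hs : ¬ inSwitch β x)
    (ha : IsExpansionOf β x a) :
    a 0 = gdigit β x ∧ IsExpansionOf β (gmap β x) (fun i => a (i + 1)) := by
  have hβ0 : (0:ℝ) < β := lt_trans one_pos hβ
  obtain ⟨hab, hsum⟩ := ha
  have hab' : ∀ i, 0 ≤ a (i+1) ∧ a (i+1) ≤ ⌊β⌋ := fun i => hab (i+1)
  have hsumm := exp_summable hβ hab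
  set z := ∑' i, (a (i+1) : ℝ) / β ^ (i + 1) with hzdef
  have hzeq : β * x - (a 0 : ℝ) = z := by
    rw [hsum, Summable.tsum_eq_zero_add hsumm]
    have h2 : ∀ b : ℕ, (a (b+1) : ℝ) / β ^ (b + 1 + 1) = ((a (b+1) : ℝ) / β ^ (b + 1)) * (1/β) := by
      intro b
      rw [pow_succ]
      field_simp
    rw [tsum_congr h2, tsum_mul_right, pow_one]
    field_simp
    all_goals ring
  have hz0 : 0 ≤ z := tsum_nonneg (fun i => by
    have h0 : (0:ℝ) ≤ (a (i+1) : ℝ) := by exact_mod_cast (hab (i+1)).1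
    positivity)
  have hzF : z ≤ (⌊β⌋:ℝ)/(β-1) := exp_tail_le hβ hab'
  have hg : a 0 ≤ gdigit β x := by
    refine le_min (Int.le_floor.2 ?_) (hab 0).2
    linarith
  have hl : ldigit β x ≤ a 0 := by
    unfold ldigit
    have h3 : ⌊β⌋ - a 0 ≤ gdigit β (lref β x) := by
      refine le_min (Int.le_floor.2 ?_) (by have := (hab 0).1; omega)
      rw [beta_lref hβ]
      push_cast
      linarith
    omega
  have heq := noswitch_eq hβ hx hs
  have ha0 : a 0 = gdigit β x := by omega
  refine ⟨ha0, hab', ?_⟩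
  show gmap β x = _
  unfold gmap
  rw [← ha0]
  exact hzeq

lemma uall (hβ : 1 < β) :
    ∀ (i : ℕ) (x : ℝ) (a : ℕ → ℤ), x ∈ Jbeta β →
      (∀ m, ¬ inSwitch β ((gmap β)^[m] x)) → IsExpansionOf β x a →
      a i = gdigit β ((gmap β)^[i] x) := by
  intro i
  induction i with
  | zero =>
    intro x a hx hns ha
    simpa using (ustep hβ hx (by simpa using hns 0) ha).1
  | succ i ih =>
    intro x a hx hns ha
    have hstep := ustep hβ hx (by simpa using hns 0) ha
    have hns' : ∀ m, ¬ inSwitch β ((gmap β)^[m] (gmap β x)) := by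
      intro m
      have := hns (m+1)
      rwa [Function.iterate_succ_apply] at this
    have := ih (gmap β x) (fun j => a (j+1)) (gmap_mem hβ hx) hns' hstep.2
    rwa [← Function.iterate_succ_apply] at this

lemma claimU (hβ : 1 < β) (hy : y ∈ Jbeta β)
    (hns : ∀ m, ¬ inSwitch β ((gmap β)^[m] y)) : y ∈ uniqueExpSet β := by
  refine ⟨hy, ⟨fun i => rdig β i (fun _ => true) y, rdig_expansion hβ hy _, ?_⟩⟩
  intro b hb
  funext i
  rw [uall hβ i y b hy hns hb, ← uall hβ i y _ hy hns (rdig_expansion hβ hy _)]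

end Unique
section Switch

variable {β x : ℝ} {ω : ℕ → Bool}

lemma kmap_snd (β : ℝ) (ω : ℕ → Bool) (x : ℝ) :
    (kmap β (ω, x)).2 = β * x - (rdigit β ω x : ℝ) := rfl

lemma orbit_foldr (β : ℝ) :
    ∀ (n : ℕ) (ω : ℕ → Bool) (x : ℝ), ∃ l : List Bool, l.length = n ∧
      l.foldr (fun u y => if u then gmap β y else lmap β y) x = ((kmap β)^[n] (ω, x)).2 := by
  intro n
  induction n with
  | zero => exact fun ω x => ⟨[], rfl, rfl⟩
  | succ n ih =>
    intro ω x
    rw [Function.iterate_succ_apply]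
    obtain ⟨l, hlen, hfold⟩ := ih (kmap β (ω, x)).1 (kmap β (ω, x)).2
    have hp : ((kmap β (ω, x)).1, (kmap β (ω, x)).2) = kmap β (ω, x) := rfl
    rw [hp] at hfold
    rcases rdigit_cases β ω x with h | h
    · refine ⟨l ++ [true], by simp [hlen], ?_⟩
      rw [List.foldr_append]
      have hx2 : (kmap β (ω, x)).2 = gmap β x := by rw [kmap_snd, h]; rfl
      rw [hx2] at hfold
      simpa using hfold
    · refine ⟨l ++ [false], by simp [hlen], ?_⟩
      rw [List.foldr_append]
      have hx2 : (kmap β (ω, x)).2 = lmap β x := by rw [kmap_snd, h]; rfl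
      rw [hx2] at hfold
      simpa using hfold

lemma rdigit_of_not_switch (h : ¬ inSwitch β x) (ω : ℕ → Bool) :
    rdigit β ω x = gdigit β x := by
  unfold rdigit
  rw [if_neg]
  tauto

lemma gmap_tail {n : ℕ}
    (hns : ∀ m, n ≤ m → ¬ inSwitch β ((kmap β)^[m] (ω, x)).2) :
    ∀ m, ((kmap β)^[n + m] (ω, x)).2 = (gmap β)^[m] ((kmap β)^[n] (ω, x)).2 := by
  intro m
  induction m with
  | zero => simp
  | succ m ih =>
    have he : n + (m + 1) = (n + m) + 1 := by omega
    rw [he, orbit_succ, Function.iterate_succ_apply']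
    unfold rdig
    rw [rdigit_of_not_switch (hns (n + m) (by omega)), ih]
    rfl

lemma enters_switch (hβ : 1 < β) (hx : x ∈ Jbeta β) (hxN : x ∉ exceptionalSet β)
    (ω : ℕ → Bool) (n : ℕ) : ∃ m, n ≤ m ∧ inSwitch β ((kmap β)^[m] (ω, x)).2 := by
  by_contra hcon
  push_neg at hcon
  apply hxN
  have hns : ∀ m, n + 1 ≤ m → ¬ inSwitch β ((kmap β)^[m] (ω, x)).2 := by
    intro m hm
    exact hcon m (by omega)
  set y := ((kmap β)^[n + 1] (ω, x)).2 with hydef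
  have hy : y ∈ Jbeta β := orbit_mem hβ _ _ hx
  have hgm : ∀ m, ¬ inSwitch β ((gmap β)^[m] y) := by
    intro m
    rw [← gmap_tail hns m]
    exact hns (n + 1 + m) (by omega)
  obtain ⟨l, hlen, hfold⟩ := orbit_foldr β (n + 1) ω x
  refine ⟨l, ?_, ?_⟩
  · intro h
    rw [h] at hlen
    simp at hlen
  · rw [hfold]
    exact claimU hβ hy hgm

end Switch
section Count

variable {β x : ℝ} {ω ω' : ℕ → Bool}

/-- number of visits of the `x`-orbit to the switch region before time `n`. -/
noncomputable def swcount (β : ℝ) (ω : ℕ → Bool) (x : ℝ) : ℕ → ℕ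
  | 0 => 0
  | n+1 => swcount β ω x n + (if inSwitch β ((kmap β)^[n] (ω, x)).2 then 1 else 0)

lemma swcount_succ (β : ℝ) (ω : ℕ → Bool) (x : ℝ) (n : ℕ) :
    swcount β ω x (n+1)
      = swcount β ω x n + (if inSwitch β ((kmap β)^[n] (ω, x)).2 then 1 else 0) := rfl

lemma swcount_mono (β : ℝ) (ω : ℕ → Bool) (x : ℝ) : Monotone (swcount β ω x) := by
  apply monotone_nat_of_le_succ
  intro n
  rw [swcount_succ]
  omega

lemma swcount_succ_le (β : ℝ) (ω : ℕ → Bool) (x : ℝ) (n : ℕ) :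
    swcount β ω x (n+1) ≤ swcount β ω x n + 1 := by
  rw [swcount_succ]
  split_ifs <;> omega

lemma swcount_unbounded (hβ : 1 < β) (hx : x ∈ Jbeta β) (hxN : x ∉ exceptionalSet β)
    (ω : ℕ → Bool) : ∀ k, ∃ n, k ≤ swcount β ω x n := by
  intro k
  induction k with
  | zero => exact ⟨0, Nat.zero_le _⟩
  | succ k ih =>
    obtain ⟨n, hn⟩ := ih
    obtain ⟨m, hnm, hsw⟩ := enters_switch hβ hx hxN ω n
    refine ⟨m + 1, ?_⟩
    rw [swcount_succ, if_pos hsw]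
    have := swcount_mono β ω x hnm
    omega

lemma orbit_agree (hβ : 1 < β) {j : ℕ} (hagree : ∀ i, i < j → ω i = ω' i) :
    ∀ n, swcount β ω x n ≤ j →
      ((kmap β)^[n] (ω, x)).2 = ((kmap β)^[n] (ω', x)).2 ∧
      ((kmap β)^[n] (ω, x)).1 = (fun i => ω (i + swcount β ω x n)) ∧
      ((kmap β)^[n] (ω', x)).1 = (fun i => ω' (i + swcount β ω x n)) := by
  intro n
  induction n with
  | zero =>
    intro _
    exact ⟨rfl, by funext i; rfl, by funext i; rfl⟩
  | succ n ih =>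
    intro hle
    have hle' : swcount β ω x n ≤ j :=
      le_trans (swcount_mono β ω x (Nat.le_succ n)) hle
    obtain ⟨hx2, hω, hω'⟩ := ih hle'
    rw [Function.iterate_succ_apply', Function.iterate_succ_apply']
    set P := (kmap β)^[n] (ω, x) with hP
    set Q := (kmap β)^[n] (ω', x) with hQ
    by_cases hs : inSwitch β P.2
    · have hc : swcount β ω x (n+1) = swcount β ω x n + 1 := by
        rw [swcount_succ, if_pos hs]
      have hlt : swcount β ω x n < j := by omega
      have hbit : P.1 0 = Q.1 0 := by
        rw [hω, hω']
        exact hagree _ (by omega)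
      have hsq : inSwitch β Q.2 := hx2 ▸ hs
      have hdig : rdigit β P.1 P.2 = rdigit β Q.1 Q.2 := by
        unfold rdigit
        rw [← hx2, hbit]
      refine ⟨?_, ?_, ?_⟩
      · show β * P.2 - (rdigit β P.1 P.2 : ℝ) = β * Q.2 - (rdigit β Q.1 Q.2 : ℝ)
        rw [hdig, hx2]
      · show (kmap β P).1 = _
        unfold kmap
        rw [if_pos hs]
        funext i
        simp only
        rw [hω, hc]
        show ω (i + 1 + swcount β ω x n) = ω (i + (swcount β ω x n + 1))
        congr 1
        omega
      · show (kmap β Q).1 = _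
        unfold kmap
        rw [if_pos hsq]
        funext i
        simp only
        rw [hω', hc]
        show ω' (i + 1 + swcount β ω x n) = ω' (i + (swcount β ω x n + 1))
        congr 1
        omega
    · have hc : swcount β ω x (n+1) = swcount β ω x n := by
        rw [swcount_succ, if_neg hs]
        omega
      have hsq : ¬ inSwitch β Q.2 := hx2 ▸ hs
      refine ⟨?_, ?_, ?_⟩
      · show β * P.2 - (rdigit β P.1 P.2 : ℝ) = β * Q.2 - (rdigit β Q.1 Q.2 : ℝ)
        rw [rdigit_of_not_switch hs, rdigit_of_not_switch hsq, ← hx2]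
      · show (kmap β P).1 = _
        unfold kmap
        rw [if_neg hs, hc]
        exact hω
      · show (kmap β Q).1 = _
        unfold kmap
        rw [if_neg hsq, hc]
        exact hω'

lemma digits_injective (hβ : 1 < β) (hx : x ∈ Jbeta β) (hxN : x ∉ exceptionalSet β)
    (ω ω' : ℕ → Bool) (hne : ω ≠ ω') :
    (fun i => rdig β i ω x) ≠ (fun i => rdig β i ω' x) := by
  intro hcontra
  have hex : ∃ j, ω j ≠ ω' j := by
    by_contra h
    push_neg at h
    exact hne (funext h)
  set j := Nat.find hex with hjdef
  have hbj : ω j ≠ ω' j := Nat.find_spec hex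
  have hagree : ∀ i, i < j → ω i = ω' i := by
    intro i hi
    have := Nat.find_min hex hi
    tauto
  have hexn : ∃ n, j + 1 ≤ swcount β ω x n := swcount_unbounded hβ hx hxN ω (j+1)
  set n1 := Nat.find hexn with hn1def
  have hspec : j + 1 ≤ swcount β ω x n1 := Nat.find_spec hexn
  have hn1pos : 1 ≤ n1 := by
    rcases Nat.eq_zero_or_pos n1 with h | h
    · rw [h] at hspec
      simp [swcount] at hspec
    · exact h
  set n := n1 - 1 with hndef
  have hsucc : n + 1 = n1 := by omega
  have h1 : swcount β ω x n ≤ j := by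
    have := Nat.find_min hexn (show n < n1 by omega)
    omega
  have h2 : j + 1 ≤ swcount β ω x (n+1) := by rw [hsucc]; exact hspec
  have h3 := swcount_succ_le β ω x n
  have hcn : swcount β ω x n = j := by omega
  have hsw : inSwitch β ((kmap β)^[n] (ω, x)).2 := by
    by_contra hns
    rw [swcount_succ, if_neg hns] at h2
    omega
  obtain ⟨hx2, hω, hω'⟩ := orbit_agree hβ hagree n h1
  have hd := congrFun hcontra n
  unfold rdig at hd
  unfold rdigit at hd
  rw [← hx2, hω, hω', hcn] at hd
  simp only [Nat.zero_add] at hd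
  have hswq := hsw
  have hlg := switch_lt hβ hsw
  rcases Bool.eq_false_or_eq_true (ω j) with hb | hb <;>
    rcases Bool.eq_false_or_eq_true (ω' j) with hb' | hb'
  · exact hbj (hb.trans hb'.symm)
  · rw [if_neg (by simp [hb]), if_pos ⟨hsw, hb'⟩] at hd
    omega
  · rw [if_pos ⟨hsw, hb⟩, if_neg (by simp [hb'])] at hd
    omega
  · exact hbj (hb.trans hb'.symm)

end Count

/-- for `x ∈ J_β \ N`, distinct coin sequences produce distinct digit
sequences; consequently `x` has at least `2^ℵ₀` distinct expansions in base `β`. -/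
theorem continuum_many_expansions (β : ℝ) (hβ : 1 < β) (hni : ¬ ∃ m : ℤ, β = (m : ℝ))
    (x : ℝ) (hx : x ∈ Jbeta β) (hxN : x ∉ exceptionalSet β) :
    (∀ ω ω' : ℕ → Bool, ω ≠ ω' →
      (fun i => rdig β i ω x) ≠ (fun i => rdig β i ω' x)) ∧
      Cardinal.continuum ≤ Cardinal.mk {a : ℕ → ℤ // IsExpansionOf β x a} := by
  refine ⟨fun ω ω' h => digits_injective hβ hx hxN ω ω' h, ?_⟩
  have hinj : Function.Injective
      (fun ω : ℕ → Bool => (⟨fun i => rdig β i ω x, rdig_expansion hβ hx ω⟩ :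
        {a : ℕ → ℤ // IsExpansionOf β x a})) := by
    intro ω ω' h
    by_contra hne
    exact digits_injective hβ hx hxN ω ω' hne (congrArg Subtype.val h)
  have hcard := Cardinal.mk_le_of_injective hinj
  have hc : Cardinal.mk (ℕ → Bool) = Cardinal.continuum := by
    rw [Cardinal.mk_arrow]
    simp [Cardinal.two_power_aleph0]
  rwa [hc] at hcard
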